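/- (Equation (10).) For positive integers k₂,…,k_l and an integer k_{l+1} ≥ 0, assume that k_{l+1} ≥ 1 or k_i ≥ 2 for some 2 ≤ i ≤ l. Then S(1, k₂,…,k_l, k_{l+1}) = T(k₂,…,k_l, k_{l+1}+1). -/

import Mathlib

open Filter Finset
open scoped NNReal ENNReal

lemma tsum_eq_toReal_ofReal {ι : Type*} {f : ι → ℝ} (hf : ∀ i, 0 ≤ f i) :
    ∑' i, f i = (∑' i, ENNReal.ofReal (f i)).toReal := by
  by_cases h : Summable f
  · rw [← ENNReal.ofReal_tsum_of_nonneg hf h, ENNReal.toReal_ofReal (tsum_nonneg hf)]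
  · rw [tsum_eq_zero_of_not_summable h]
    have hne : ∑' i, ENNReal.ofReal (f i) = ⊤ := by
      by_contra hne
      exact h ((ENNReal.summable_toReal hne).congr fun i => ENNReal.toReal_ofReal (hf i))
    simp [hne]

lemma key_hasSum (c a : ℕ) (hc : 1 ≤ c) (hca : c ≤ a) :
    HasSum (fun j : ℕ => (((a + 1 + j - c) * (a + 1 + j) : ℕ) : ℝ)⁻¹)
      (∑ d ∈ Finset.range c, (((a - d) * c : ℕ) : ℝ)⁻¹) := by
  set f : ℕ → ℝ := fun N => ∑ d ∈ Finset.range c, (((a + N - d) * c : ℕ) : ℝ)⁻¹ with hf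
  have hterm : ∀ j : ℕ, (((a + 1 + j - c) * (a + 1 + j) : ℕ) : ℝ)⁻¹ = f j - f (j + 1) := by
    intro j
    have h1 : f j - f (j+1)
        = ∑ d ∈ Finset.range c, ((((a + j + 1 - (d+1)) * c : ℕ) : ℝ)⁻¹ - (((a + j + 1 - d) * c : ℕ) : ℝ)⁻¹) := by
      have hA : f j = ∑ d ∈ Finset.range c, (((a + j + 1 - (d+1)) * c : ℕ) : ℝ)⁻¹ :=
        Finset.sum_congr rfl (fun d hd => by
          have : a + j - d = a + j + 1 - (d+1) := by omega
          rw [this])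
      have hB : f (j+1) = ∑ d ∈ Finset.range c, (((a + j + 1 - d) * c : ℕ) : ℝ)⁻¹ :=
        Finset.sum_congr rfl (fun d hd => by
          have : a + (j+1) - d = a + j + 1 - d := by omega
          rw [this])
      rw [hA, hB, ← Finset.sum_sub_distrib]
    rw [h1, Finset.sum_range_sub (fun d => (((a + j + 1 - d) * c : ℕ) : ℝ)⁻¹) c]
    have e1 : ((a + j + 1 - c : ℕ) : ℝ) = (a : ℝ) + j + 1 - c := by
      have : c ≤ a + j + 1 := by omega
      push_cast [this]; ring
    have e0 : ((a + j + 1 - 0 : ℕ) : ℝ) = (a : ℝ) + j + 1 := by push_cast; ring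
    have e2 : ((a + 1 + j - c : ℕ) : ℝ) = (a : ℝ) + j + 1 - c := by
      have : c ≤ a + 1 + j := by omega
      push_cast [this]; ring
    push_cast [e1, e0, e2]
    have hA : (0:ℝ) < (a:ℝ) + j + 1 - c := by
      have : c < a + 1 + j := by omega
      have := (Nat.cast_lt (α := ℝ)).2 this
      push_cast at this
      linarith
    have hA2 : (0:ℝ) < (a:ℝ) + j + 1 := by positivity
    have hC : (0:ℝ) < (c:ℝ) := by exact_mod_cast hc
    field_simp
    ring
  have hnonneg : ∀ j : ℕ, (0:ℝ) ≤ (((a + 1 + j - c) * (a + 1 + j) : ℕ) : ℝ)⁻¹ := by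
    intro j; positivity
  have hfnonneg : ∀ N, 0 ≤ f N := by
    intro N
    apply Finset.sum_nonneg
    intro d hd; positivity
  have hpartial : ∀ N, ∑ j ∈ Finset.range N, (((a + 1 + j - c) * (a + 1 + j) : ℕ) : ℝ)⁻¹ = f 0 - f N := by
    intro N
    rw [Finset.sum_congr rfl fun j _ => hterm j, Finset.sum_range_sub' f N]
  have hbound : ∀ N, f N ≤ c * ((N:ℝ) + 1)⁻¹ := by
    intro N
    have : ∀ d ∈ Finset.range c, (((a + N - d) * c : ℕ) : ℝ)⁻¹ ≤ ((N:ℝ)+1)⁻¹ := by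
      intro d hd
      simp only [Finset.mem_range] at hd
      apply inv_anti₀ (by positivity)
      have : N + 1 ≤ (a + N - d) * c := by
        have h1 : N + 1 ≤ a + N - d := by omega
        calc N + 1 ≤ a + N - d := h1
        _ ≤ (a + N - d) * c := Nat.le_mul_of_pos_right _ hc
      exact_mod_cast this
    calc f N ≤ ∑ d ∈ Finset.range c, ((N:ℝ)+1)⁻¹ := Finset.sum_le_sum this
    _ = c * ((N:ℝ)+1)⁻¹ := by simp [mul_comm]
  have htend : Tendsto f atTop (nhds 0) := by
    apply squeeze_zero hfnonneg hbound
    have : Tendsto (fun N : ℕ => ((N:ℝ)+1)⁻¹) atTop (nhds 0) := by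
      simpa [one_div] using tendsto_one_div_add_atTop_nhds_zero_nat (𝕜 := ℝ)
    simpa using this.const_mul (c:ℝ)
  have hsummable : Summable (fun j : ℕ => (((a + 1 + j - c) * (a + 1 + j) : ℕ) : ℝ)⁻¹) := by
    apply summable_of_sum_range_le hnonneg
    intro n
    rw [hpartial]
    have := hfnonneg n
    linarith
  have h2 : Tendsto (fun N => ∑ j ∈ Finset.range N, (((a + 1 + j - c) * (a + 1 + j) : ℕ) : ℝ)⁻¹) atTop (nhds (f 0)) := by
    simp only [hpartial]
    simpa using tendsto_const_nhds.sub htend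
  have h3 := hsummable.hasSum.tendsto_sum_nat
  have h4 : ∑' j, (((a + 1 + j - c) * (a + 1 + j) : ℕ) : ℝ)⁻¹ = f 0 := tendsto_nhds_unique h3 h2
  have h5 : f 0 = ∑ d ∈ Finset.range c, (((a - d) * c : ℕ) : ℝ)⁻¹ := by
    apply Finset.sum_congr rfl
    intro d hd
    have : a + 0 - d = a - d := by omega
    rw [this]
  rw [← h5, ← h4]
  exact hsummable.hasSum


lemma ofReal_nat_inv (N : ℕ) (hN : 0 < N) :
    ENNReal.ofReal ((N : ℝ))⁻¹ = ((N : ℕ) : ℝ≥0∞)⁻¹ := by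
  rw [ENNReal.ofReal_inv_of_pos (by exact_mod_cast hN), ENNReal.ofReal_natCast]

lemma key_tsum_ennreal (c a : ℕ) (hc : 1 ≤ c) (hca : c ≤ a) :
    (∑' j : ℕ, (((a + 1 + j - c) * (a + 1 + j) : ℕ) : ℝ≥0∞)⁻¹)
      = ∑ d ∈ Finset.range c, (((a - d) * c : ℕ) : ℝ≥0∞)⁻¹ := by
  have hs := key_hasSum c a hc hca
  have h1 : ENNReal.ofReal (∑' j : ℕ, (((a + 1 + j - c) * (a + 1 + j) : ℕ) : ℝ)⁻¹)
      = ∑' j : ℕ, ENNReal.ofReal ((((a + 1 + j - c) * (a + 1 + j) : ℕ) : ℝ)⁻¹) :=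
    ENNReal.ofReal_tsum_of_nonneg (fun j => by positivity) hs.summable
  rw [hs.tsum_eq] at h1
  have h2 : ∀ j : ℕ, ENNReal.ofReal ((((a + 1 + j - c) * (a + 1 + j) : ℕ) : ℝ)⁻¹)
      = (((a + 1 + j - c) * (a + 1 + j) : ℕ) : ℝ≥0∞)⁻¹ := fun j =>
    ofReal_nat_inv _ (Nat.mul_pos (by omega) (by omega))
  have h3 : ∀ d ∈ Finset.range c, ENNReal.ofReal ((((a - d) * c : ℕ) : ℝ)⁻¹)
      = (((a - d) * c : ℕ) : ℝ≥0∞)⁻¹ := by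
    intro d hd
    simp only [Finset.mem_range] at hd
    exact ofReal_nat_inv _ (Nat.mul_pos (by omega) hc)
  calc (∑' j : ℕ, (((a + 1 + j - c) * (a + 1 + j) : ℕ) : ℝ≥0∞)⁻¹)
      = ∑' j : ℕ, ENNReal.ofReal ((((a + 1 + j - c) * (a + 1 + j) : ℕ) : ℝ)⁻¹) :=
        (tsum_congr h2).symm
    _ = ENNReal.ofReal (∑ d ∈ Finset.range c, (((a - d) * c : ℕ) : ℝ)⁻¹) := h1.symm
    _ = ∑ d ∈ Finset.range c, ENNReal.ofReal ((((a - d) * c : ℕ) : ℝ)⁻¹) :=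
        ENNReal.ofReal_sum_of_nonneg (fun d hd => by positivity)
    _ = ∑ d ∈ Finset.range c, (((a - d) * c : ℕ) : ℝ≥0∞)⁻¹ := Finset.sum_congr rfl h3

lemma key_ennreal (a c P m : ℕ) (hc : 1 ≤ c) (hca : c ≤ a) (hP : 1 ≤ P) :
    (∑' n0 : ℕ, if a < n0 then ((((n0 - c) * (n0 * P)) * c ^ m : ℕ) : ℝ≥0∞)⁻¹ else 0)
      = ∑' d : ℕ, if d < c then (((a - d) * (P * c ^ (m + 1)) : ℕ) : ℝ≥0∞)⁻¹ else 0 := by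
  -- RHS: finite sum
  have hR : (∑' d : ℕ, if d < c then (((a - d) * (P * c ^ (m + 1)) : ℕ) : ℝ≥0∞)⁻¹ else 0)
      = ∑ d ∈ Finset.range c, (((a - d) * (P * c ^ (m + 1)) : ℕ) : ℝ≥0∞)⁻¹ := by
    rw [tsum_eq_sum (s := Finset.range c) (fun d hd => by
      simp only [Finset.mem_range] at hd
      simp [hd])]
    apply Finset.sum_congr rfl
    intro d hd
    simp only [Finset.mem_range] at hd
    simp [hd]
  rw [hR]
  -- LHS: shift by a+1
  have hL : (∑' n0 : ℕ, if a < n0 then ((((n0 - c) * (n0 * P)) * c ^ m : ℕ) : ℝ≥0∞)⁻¹ else 0)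
      = ∑' j : ℕ, ((((a + 1 + j - c) * ((a + 1 + j) * P)) * c ^ m : ℕ) : ℝ≥0∞)⁻¹ := by
    rw [← Summable.sum_add_tsum_nat_add' (k := a + 1) ENNReal.summable]
    have hz : ∑ i ∈ Finset.range (a + 1),
        (if a < i then ((((i - c) * (i * P)) * c ^ m : ℕ) : ℝ≥0∞)⁻¹ else 0) = 0 := by
      apply Finset.sum_eq_zero
      intro i hi
      simp only [Finset.mem_range] at hi
      simp [show ¬ a < i by omega]
    rw [hz, zero_add]
    apply tsum_congr
    intro j
    rw [if_pos (by omega)]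
    have h1 : j + (a + 1) = a + 1 + j := by omega
    rw [h1]
  rw [hL]
  -- factor out K = P * c^m
  have hfac : ∀ j : ℕ, ((((a + 1 + j - c) * ((a + 1 + j) * P)) * c ^ m : ℕ) : ℝ≥0∞)⁻¹
      = (((a + 1 + j - c) * (a + 1 + j) : ℕ) : ℝ≥0∞)⁻¹ * ((P * c ^ m : ℕ) : ℝ≥0∞)⁻¹ := by
    intro j
    rw [← ENNReal.mul_inv (Or.inl (by exact_mod_cast (Nat.mul_pos (show 0 < a + 1 + j - c by omega) (by omega)).ne')) (Or.inl (ENNReal.natCast_ne_top _))]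
    congr 1
    push_cast
    ring
  have hfac2 : ∀ d ∈ Finset.range c, (((a - d) * (P * c ^ (m + 1)) : ℕ) : ℝ≥0∞)⁻¹
      = (((a - d) * c : ℕ) : ℝ≥0∞)⁻¹ * ((P * c ^ m : ℕ) : ℝ≥0∞)⁻¹ := by
    intro d hd
    simp only [Finset.mem_range] at hd
    rw [← ENNReal.mul_inv (Or.inl (by exact_mod_cast (Nat.mul_pos (show 0 < a - d by omega) hc).ne')) (Or.inl (ENNReal.natCast_ne_top _))]
    congr 1
    push_cast
    ring
  rw [tsum_congr hfac, ENNReal.tsum_mul_right, key_tsum_ennreal c a hc hca,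
    Finset.sum_congr rfl hfac2, ← Finset.sum_mul]


lemma cons_dec_iff {l : ℕ} (n0 : ℕ) (p : Fin (l + 1) → ℕ) :
    (∀ i j : Fin (l + 2), i < j → (Fin.cons n0 p : Fin (l+2) → ℕ) j < (Fin.cons n0 p : Fin (l+2) → ℕ) i) ↔
      ((∀ i j : Fin (l + 1), i < j → p j < p i) ∧ p 0 < n0) := by
  constructor
  · intro H
    refine ⟨fun i j hij => ?_, ?_⟩
    · have := H i.succ j.succ (by simpa using hij)
      simpa using this
    · have := H 0 (0 : Fin (l + 1)).succ (Fin.succ_pos _)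
      simpa using this
  · rintro ⟨hp, h0⟩ i j hij
    induction i using Fin.cases with
    | zero =>
      induction j using Fin.cases with
      | zero => exact absurd hij (lt_irrefl _)
      | succ j' =>
        simp only [Fin.cons_succ, Fin.cons_zero]
        rcases eq_or_ne j' 0 with rfl | hne
        · exact h0
        · exact lt_trans (hp 0 j' (Fin.pos_of_ne_zero hne)) h0
    | succ i' =>
      induction j using Fin.cases with
      | zero => exact absurd hij (Fin.not_lt_zero _)
      | succ j' =>
        simp only [Fin.cons_succ]
        exact hp i' j' (by simpa using hij)

lemma snoc_dec_iff {l : ℕ} (d : ℕ) (p : Fin (l + 1) → ℕ) :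
    (∀ i j : Fin (l + 2), i < j → (Fin.snoc p d : Fin (l+2) → ℕ) j < (Fin.snoc p d : Fin (l+2) → ℕ) i) ↔
      ((∀ i j : Fin (l + 1), i < j → p j < p i) ∧ d < p (Fin.last l)) := by
  constructor
  · intro H
    refine ⟨fun i j hij => ?_, ?_⟩
    · have := H i.castSucc j.castSucc (by simpa using hij)
      simpa using this
    · have := H (Fin.last l).castSucc (Fin.last (l + 1)) (Fin.castSucc_lt_last _)
      simpa using this
  · rintro ⟨hp, hd⟩ i j hij
    induction j using Fin.lastCases with
    | last =>
      have hi : i ≠ Fin.last (l + 1) := ne_of_lt hij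
      obtain ⟨i', rfl⟩ := Fin.exists_castSucc_eq.mpr hi
      simp only [Fin.snoc_castSucc, Fin.snoc_last]
      rcases eq_or_ne i' (Fin.last l) with rfl | hne
      · exact hd
      · exact lt_trans hd (hp i' (Fin.last l) (lt_of_le_of_ne (Fin.le_last _) hne))
    | cast j' =>
      have hi : i ≠ Fin.last (l + 1) := by
        intro h
        rw [h] at hij
        exact absurd hij (not_lt.mpr (Fin.le_last _))
      obtain ⟨i', rfl⟩ := Fin.exists_castSucc_eq.mpr hi
      simp only [Fin.snoc_castSucc]
      exact hp i' j' (by simpa using hij)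


lemma dec_last_le {l : ℕ} {p : Fin (l + 1) → ℕ}
    (h : ∀ i j : Fin (l + 1), i < j → p j < p i) (i : Fin (l + 1)) :
    p (Fin.last l) ≤ p i := by
  rcases eq_or_lt_of_le (Fin.le_last i) with h1 | h1
  · rw [h1]
  · exact le_of_lt (h i (Fin.last l) h1)

lemma tsum_cons_split {l : ℕ} (f : (Fin (l + 2) → ℕ) → ℝ≥0∞) :
    ∑' n : Fin (l + 2) → ℕ, f n
      = ∑' (p : Fin (l + 1) → ℕ) (n0 : ℕ), f (Fin.cons n0 p) := by
  calc ∑' n : Fin (l + 2) → ℕ, f n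
      = ∑' q : ℕ × (Fin (l + 1) → ℕ), f ((Fin.consEquiv fun _ => ℕ) q) :=
        ((Fin.consEquiv fun _ => ℕ).tsum_eq f).symm
    _ = ∑' (n0 : ℕ) (p : Fin (l + 1) → ℕ), f (Fin.cons n0 p) :=
        ENNReal.tsum_prod (f := fun n0 p => f (Fin.cons n0 p))
    _ = ∑' (p : Fin (l + 1) → ℕ) (n0 : ℕ), f (Fin.cons n0 p) := ENNReal.tsum_comm

lemma tsum_snoc_split {l : ℕ} (f : (Fin (l + 2) → ℕ) → ℝ≥0∞) :
    ∑' n : Fin (l + 2) → ℕ, f n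
      = ∑' (p : Fin (l + 1) → ℕ) (d : ℕ), f (Fin.snoc p d) := by
  calc ∑' n : Fin (l + 2) → ℕ, f n
      = ∑' q : ℕ × (Fin (l + 1) → ℕ), f ((Fin.snocEquiv fun _ => ℕ) q) :=
        ((Fin.snocEquiv fun _ => ℕ).tsum_eq f).symm
    _ = ∑' (d : ℕ) (p : Fin (l + 1) → ℕ), f (Fin.snoc p d) :=
        ENNReal.tsum_prod (f := fun d p => f (Fin.snoc p d))
    _ = ∑' (p : Fin (l + 1) → ℕ) (d : ℕ), f (Fin.snoc p d) := ENNReal.tsum_comm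

lemma main_ennreal (l m : ℕ) (e : Fin l → ℕ) :
    (∑' n : Fin (l + 2) → ℕ,
      if (∀ i j : Fin (l + 2), i < j → n j < n i) ∧ (∀ i, 1 ≤ n i) then
        (((n 0 - n (Fin.last (l + 1))) *
          (∏ i : Fin (l + 1), (n i.castSucc) ^ (Fin.cons 1 e : Fin (l + 1) → ℕ) i) *
          (n (Fin.last (l + 1))) ^ m : ℕ) : ℝ≥0∞)⁻¹
      else 0)
    = ∑' n : Fin (l + 2) → ℕ,
      if (∀ i j : Fin (l + 2), i < j → n j < n i) then
        (((n 0 - n (Fin.last (l + 1))) *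
          ∏ i : Fin (l + 1), (n i.castSucc) ^ (Fin.snoc e (m + 1) : Fin (l + 1) → ℕ) i : ℕ) : ℝ≥0∞)⁻¹
      else 0 := by
  rw [tsum_cons_split, tsum_snoc_split]
  apply tsum_congr
  intro p
  set a := p 0 with ha
  set c := p (Fin.last l) with hcdef
  set P := ∏ i : Fin l, (p i.castSucc) ^ e i with hP
  have hlastS : ∀ n0 : ℕ, (Fin.cons n0 p : Fin (l + 2) → ℕ) (Fin.last (l + 1)) = c := by
    intro n0
    rw [← Fin.succ_last, Fin.cons_succ]
  have hprodS : ∀ n0 : ℕ,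
      (∏ i : Fin (l + 1), ((Fin.cons n0 p : Fin (l + 2) → ℕ) i.castSucc)
        ^ (Fin.cons 1 e : Fin (l + 1) → ℕ) i) = n0 * P := by
    intro n0
    rw [Fin.prod_univ_succ]
    simp only [Fin.castSucc_zero, Fin.cons_zero, Fin.cons_succ, pow_one]
    rw [hP]
    refine congrArg (n0 * ·) (Finset.prod_congr rfl fun i _ => ?_)
    rw [← Fin.succ_castSucc, Fin.cons_succ]
  have hprodT : ∀ d : ℕ,
      (∏ i : Fin (l + 1), ((Fin.snoc p d : Fin (l + 2) → ℕ) i.castSucc)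
        ^ (Fin.snoc e (m + 1) : Fin (l + 1) → ℕ) i) = P * c ^ (m + 1) := by
    intro d
    rw [Fin.prod_univ_castSucc]
    congr 1
    · apply Finset.prod_congr rfl
      intro i _
      rw [Fin.snoc_castSucc, Fin.snoc_castSucc]
    · rw [Fin.snoc_castSucc, Fin.snoc_last]
  have hT0 : ∀ d : ℕ, (Fin.snoc p d : Fin (l + 2) → ℕ) 0 = a := by
    intro d
    rw [show (0 : Fin (l + 2)) = (0 : Fin (l + 1)).castSucc from rfl, Fin.snoc_castSucc]
  by_cases hdec : ∀ i j : Fin (l + 1), i < j → p j < p i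
  · by_cases hc1 : 1 ≤ c
    · have hca : c ≤ a := dec_last_le hdec 0
      have hP1 : 1 ≤ P := by
        apply Finset.one_le_prod'
        intro i _
        have h1 : 1 ≤ p i.castSucc := le_trans hc1 (dec_last_le hdec _)
        exact Nat.one_le_pow _ _ h1
      have hF : ∀ n0 : ℕ,
          (if (∀ i j : Fin (l + 2), i < j → (Fin.cons n0 p : Fin (l+2) → ℕ) j < (Fin.cons n0 p : Fin (l+2) → ℕ) i)
              ∧ (∀ i, 1 ≤ (Fin.cons n0 p : Fin (l+2) → ℕ) i) then
            ((((Fin.cons n0 p : Fin (l+2) → ℕ) 0 - (Fin.cons n0 p : Fin (l+2) → ℕ) (Fin.last (l + 1))) *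
              (∏ i : Fin (l + 1), ((Fin.cons n0 p : Fin (l+2) → ℕ) i.castSucc) ^ (Fin.cons 1 e : Fin (l + 1) → ℕ) i) *
              ((Fin.cons n0 p : Fin (l+2) → ℕ) (Fin.last (l + 1))) ^ m : ℕ) : ℝ≥0∞)⁻¹
          else 0)
          = if a < n0 then ((((n0 - c) * (n0 * P)) * c ^ m : ℕ) : ℝ≥0∞)⁻¹ else 0 := by
        intro n0
        by_cases hlt : a < n0
        · rw [if_pos hlt, if_pos]
          · rw [hlastS, hprodS, Fin.cons_zero]
          · refine ⟨(cons_dec_iff n0 p).2 ⟨hdec, hlt⟩, ?_⟩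
            intro i
            induction i using Fin.cases with
            | zero => rw [Fin.cons_zero]; omega
            | succ i' =>
              rw [Fin.cons_succ]
              exact le_trans hc1 (dec_last_le hdec i')
        · rw [if_neg hlt, if_neg]
          rintro ⟨h1, _⟩
          exact hlt ((cons_dec_iff n0 p).1 h1).2
      have hG : ∀ d : ℕ,
          (if (∀ i j : Fin (l + 2), i < j → (Fin.snoc p d : Fin (l+2) → ℕ) j < (Fin.snoc p d : Fin (l+2) → ℕ) i) then
            ((((Fin.snoc p d : Fin (l+2) → ℕ) 0 - (Fin.snoc p d : Fin (l+2) → ℕ) (Fin.last (l + 1))) *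
              ∏ i : Fin (l + 1), ((Fin.snoc p d : Fin (l+2) → ℕ) i.castSucc) ^ (Fin.snoc e (m + 1) : Fin (l + 1) → ℕ) i : ℕ) : ℝ≥0∞)⁻¹
          else 0)
          = if d < c then (((a - d) * (P * c ^ (m + 1)) : ℕ) : ℝ≥0∞)⁻¹ else 0 := by
        intro d
        by_cases hlt : d < c
        · rw [if_pos hlt, if_pos]
          · rw [hT0, Fin.snoc_last, hprodT]
          · exact (snoc_dec_iff d p).2 ⟨hdec, hlt⟩
        · rw [if_neg hlt, if_neg]
          intro h1
          exact hlt ((snoc_dec_iff d p).1 h1).2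
      rw [tsum_congr hF, tsum_congr hG]
      exact key_ennreal a c P m hc1 hca hP1
    · have hF0 : ∀ n0 : ℕ,
          (if (∀ i j : Fin (l + 2), i < j → (Fin.cons n0 p : Fin (l+2) → ℕ) j < (Fin.cons n0 p : Fin (l+2) → ℕ) i)
              ∧ (∀ i, 1 ≤ (Fin.cons n0 p : Fin (l+2) → ℕ) i) then
            ((((Fin.cons n0 p : Fin (l+2) → ℕ) 0 - (Fin.cons n0 p : Fin (l+2) → ℕ) (Fin.last (l + 1))) *
              (∏ i : Fin (l + 1), ((Fin.cons n0 p : Fin (l+2) → ℕ) i.castSucc) ^ (Fin.cons 1 e : Fin (l + 1) → ℕ) i) *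
              ((Fin.cons n0 p : Fin (l+2) → ℕ) (Fin.last (l + 1))) ^ m : ℕ) : ℝ≥0∞)⁻¹
          else 0) = 0 := by
        intro n0
        rw [if_neg]
        rintro ⟨_, h2⟩
        have := h2 (Fin.last (l + 1))
        rw [hlastS] at this
        exact hc1 this
      have hG0 : ∀ d : ℕ,
          (if (∀ i j : Fin (l + 2), i < j → (Fin.snoc p d : Fin (l+2) → ℕ) j < (Fin.snoc p d : Fin (l+2) → ℕ) i) then
            ((((Fin.snoc p d : Fin (l+2) → ℕ) 0 - (Fin.snoc p d : Fin (l+2) → ℕ) (Fin.last (l + 1))) *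
              ∏ i : Fin (l + 1), ((Fin.snoc p d : Fin (l+2) → ℕ) i.castSucc) ^ (Fin.snoc e (m + 1) : Fin (l + 1) → ℕ) i : ℕ) : ℝ≥0∞)⁻¹
          else 0) = 0 := by
        intro d
        rw [if_neg]
        intro h1
        have := ((snoc_dec_iff d p).1 h1).2
        omega
      rw [tsum_congr hF0, tsum_congr hG0]
  · have hF0 : ∀ n0 : ℕ,
        (if (∀ i j : Fin (l + 2), i < j → (Fin.cons n0 p : Fin (l+2) → ℕ) j < (Fin.cons n0 p : Fin (l+2) → ℕ) i)
            ∧ (∀ i, 1 ≤ (Fin.cons n0 p : Fin (l+2) → ℕ) i) then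
          ((((Fin.cons n0 p : Fin (l+2) → ℕ) 0 - (Fin.cons n0 p : Fin (l+2) → ℕ) (Fin.last (l + 1))) *
            (∏ i : Fin (l + 1), ((Fin.cons n0 p : Fin (l+2) → ℕ) i.castSucc) ^ (Fin.cons 1 e : Fin (l + 1) → ℕ) i) *
            ((Fin.cons n0 p : Fin (l+2) → ℕ) (Fin.last (l + 1))) ^ m : ℕ) : ℝ≥0∞)⁻¹
        else 0) = 0 := by
      intro n0
      rw [if_neg]
      rintro ⟨h1, _⟩
      exact hdec ((cons_dec_iff n0 p).1 h1).1
    have hG0 : ∀ d : ℕ,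
        (if (∀ i j : Fin (l + 2), i < j → (Fin.snoc p d : Fin (l+2) → ℕ) j < (Fin.snoc p d : Fin (l+2) → ℕ) i) then
          ((((Fin.snoc p d : Fin (l+2) → ℕ) 0 - (Fin.snoc p d : Fin (l+2) → ℕ) (Fin.last (l + 1))) *
            ∏ i : Fin (l + 1), ((Fin.snoc p d : Fin (l+2) → ℕ) i.castSucc) ^ (Fin.snoc e (m + 1) : Fin (l + 1) → ℕ) i : ℕ) : ℝ≥0∞)⁻¹
        else 0) = 0 := by
      intro d
      rw [if_neg]
      intro h1
      exact hdec ((snoc_dec_iff d p).1 h1).1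
    rw [tsum_congr hF0, tsum_congr hG0]


/-- The multiple zeta value `ζ(k₁,…,k_l) = ∑_{n₁>n₂>⋯>n_l≥1} 1/(n₁^{k₁} ⋯ n_l^{k_l})`. -/
noncomputable def mzv (k : List ℕ) : ℝ :=
  ∑' n : Fin k.length → ℕ,
    if (∀ i j : Fin k.length, i < j → n j < n i) ∧ (∀ i, 1 ≤ n i) then
      ∏ i : Fin k.length, ((n i : ℝ) ^ k.get i)⁻¹
    else 0

/-- `T(k₁,…,k_l) = ∑_{n₁>⋯>n_l>n_{l+1}≥0} 1/((n₁-n_{l+1}) n₁^{k₁} ⋯ n_l^{k_l})`. -/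
noncomputable def Tval (k : List ℕ) : ℝ :=
  ∑' n : Fin (k.length + 1) → ℕ,
    if ∀ i j : Fin (k.length + 1), i < j → n j < n i then
      (((n 0 : ℝ) - (n (Fin.last k.length) : ℝ)) *
        ∏ i : Fin k.length, (n i.castSucc : ℝ) ^ k.get i)⁻¹
    else 0

/-- `S(k₁,…,k_l,m) = ∑_{n₁>⋯>n_l>n_{l+1}>0} 1/((n₁-n_{l+1}) n₁^{k₁} ⋯ n_l^{k_l} n_{l+1}^m)`. -/
noncomputable def Sval (k : List ℕ) (m : ℕ) : ℝ :=
  ∑' n : Fin (k.length + 1) → ℕ,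
    if (∀ i j : Fin (k.length + 1), i < j → n j < n i) ∧ (∀ i, 1 ≤ n i) then
      (((n 0 : ℝ) - (n (Fin.last k.length) : ℝ)) *
        (∏ i : Fin k.length, (n i.castSucc : ℝ) ^ k.get i) *
        (n (Fin.last k.length) : ℝ) ^ m)⁻¹
    else 0

/-- **Equation (10).**  For positive integers `k₂,…,k_l` and an integer `m = k_{l+1} ≥ 0`
(with `m ≥ 1` or some `k_i ≥ 2` to ensure convergence),
`S(1,k₂,…,k_l,m) = T(k₂,…,k_l,m+1)`. -/

lemma get_cons (t : List ℕ) (x : ℕ) (i : Fin (t.length + 1)) :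
    (x :: t).get i = (Fin.cons x t.get : Fin (t.length + 1) → ℕ) i := by
  induction i using Fin.cases <;> simp

lemma Sval_eq (t : List ℕ) (m : ℕ) :
    Sval (1 :: t) m = (∑' n : Fin (t.length + 2) → ℕ,
      if (∀ i j : Fin (t.length + 2), i < j → n j < n i) ∧ (∀ i, 1 ≤ n i) then
        (((n 0 - n (Fin.last (t.length + 1))) *
          (∏ i : Fin (t.length + 1), (n i.castSucc) ^ (Fin.cons 1 t.get : Fin (t.length + 1) → ℕ) i) *
          (n (Fin.last (t.length + 1))) ^ m : ℕ) : ℝ≥0∞)⁻¹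
      else 0).toReal := by
  have h0lt : (0 : Fin (t.length + 2)) < Fin.last (t.length + 1) := by
    rw [Fin.lt_def]; simp
  have hnonneg : ∀ n : Fin (t.length + 2) → ℕ,
      (0:ℝ) ≤ if (∀ i j : Fin (t.length + 2), i < j → n j < n i) ∧ (∀ i, 1 ≤ n i) then
        (((n 0 : ℝ) - (n (Fin.last (t.length + 1)) : ℝ)) *
          (∏ i : Fin (t.length + 1), (n i.castSucc : ℝ) ^ (1 :: t).get i) *
          (n (Fin.last (t.length + 1)) : ℝ) ^ m)⁻¹ else 0 := by
    intro n
    split_ifs with hcond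
    · have hlt := hcond.1 0 (Fin.last (t.length + 1)) h0lt
      apply inv_nonneg.mpr
      apply mul_nonneg (mul_nonneg _ _) (by positivity)
      · have : (n (Fin.last (t.length + 1)) : ℝ) ≤ (n 0 : ℝ) := by
          exact_mod_cast le_of_lt hlt
        linarith
      · apply Finset.prod_nonneg; intro i _; positivity
    · exact le_refl _
  rw [show Sval (1 :: t) m
      = ∑' n : Fin (t.length + 2) → ℕ,
        (if (∀ i j : Fin (t.length + 2), i < j → n j < n i) ∧ (∀ i, 1 ≤ n i) then
          (((n 0 : ℝ) - (n (Fin.last (t.length + 1)) : ℝ)) *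
            (∏ i : Fin (t.length + 1), (n i.castSucc : ℝ) ^ (1 :: t).get i) *
            (n (Fin.last (t.length + 1)) : ℝ) ^ m)⁻¹ else 0) from rfl,
    tsum_eq_toReal_ofReal hnonneg]
  congr 1
  apply tsum_congr
  intro n
  by_cases hcond : (∀ i j : Fin (t.length + 2), i < j → n j < n i) ∧ (∀ i, 1 ≤ n i)
  · rw [if_pos hcond, if_pos hcond]
    have hlt := hcond.1 0 (Fin.last (t.length + 1)) h0lt
    have hpos1 : 0 < n 0 - n (Fin.last (t.length + 1)) := by omega
    have hNpos : 0 < (n 0 - n (Fin.last (t.length + 1))) *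
        (∏ i : Fin (t.length + 1), (n i.castSucc) ^ (Fin.cons 1 t.get : Fin (t.length + 1) → ℕ) i) *
        (n (Fin.last (t.length + 1))) ^ m := by
      apply Nat.mul_pos (Nat.mul_pos hpos1 ?_) (pow_pos (hcond.2 _) m)
      apply Finset.prod_pos
      intro i _
      exact pow_pos (hcond.2 _) _
    rw [← ofReal_nat_inv _ hNpos]
    congr 1
    have hget : (∏ i : Fin (t.length + 1), (n i.castSucc : ℝ) ^ (1 :: t).get i)
        = ∏ i : Fin (t.length + 1), (n i.castSucc : ℝ) ^ (Fin.cons 1 t.get : Fin (t.length + 1) → ℕ) i :=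
      Finset.prod_congr rfl fun i _ => by rw [get_cons]
    rw [hget]
    push_cast [Nat.cast_sub (le_of_lt hlt)]
    ring
  · rw [if_neg hcond, if_neg hcond, ENNReal.ofReal_zero]

lemma Tval_eq (k : List ℕ) (hk : 1 ≤ k.length) :
    Tval k = (∑' n : Fin (k.length + 1) → ℕ,
      if (∀ i j : Fin (k.length + 1), i < j → n j < n i) then
        (((n 0 - n (Fin.last k.length)) *
          ∏ i : Fin k.length, (n i.castSucc) ^ k.get i : ℕ) : ℝ≥0∞)⁻¹
      else 0).toReal := by
  have h0lt : (0 : Fin (k.length + 1)) < Fin.last k.length := by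
    rw [Fin.lt_def]; simp only [Fin.val_zero, Fin.val_last]; omega
  have hmid : ∀ (n : Fin (k.length + 1) → ℕ),
      (∀ i j : Fin (k.length + 1), i < j → n j < n i) → ∀ i : Fin k.length, 0 < n i.castSucc := by
    intro n hd i
    have := hd i.castSucc (Fin.last k.length) (Fin.castSucc_lt_last i)
    omega
  have hnonneg : ∀ n : Fin (k.length + 1) → ℕ,
      (0:ℝ) ≤ if (∀ i j : Fin (k.length + 1), i < j → n j < n i) then
        (((n 0 : ℝ) - (n (Fin.last k.length) : ℝ)) *
          ∏ i : Fin k.length, (n i.castSucc : ℝ) ^ k.get i)⁻¹ else 0 := by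
    intro n
    split_ifs with hcond
    · have hlt := hcond 0 (Fin.last k.length) h0lt
      apply inv_nonneg.mpr
      apply mul_nonneg
      · have : (n (Fin.last k.length) : ℝ) ≤ (n 0 : ℝ) := by exact_mod_cast le_of_lt hlt
        linarith
      · apply Finset.prod_nonneg; intro i _; positivity
    · exact le_refl _
  rw [show Tval k
      = ∑' n : Fin (k.length + 1) → ℕ,
        (if (∀ i j : Fin (k.length + 1), i < j → n j < n i) then
          (((n 0 : ℝ) - (n (Fin.last k.length) : ℝ)) *
            ∏ i : Fin k.length, (n i.castSucc : ℝ) ^ k.get i)⁻¹ else 0) from rfl,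
    tsum_eq_toReal_ofReal hnonneg]
  congr 1
  apply tsum_congr
  intro n
  by_cases hcond : ∀ i j : Fin (k.length + 1), i < j → n j < n i
  · rw [if_pos hcond, if_pos hcond]
    have hlt := hcond 0 (Fin.last k.length) h0lt
    have hNpos : 0 < (n 0 - n (Fin.last k.length)) *
        ∏ i : Fin k.length, (n i.castSucc) ^ k.get i := by
      apply Nat.mul_pos (by omega)
      apply Finset.prod_pos
      intro i _
      exact pow_pos (hmid n hcond i) _
    rw [← ofReal_nat_inv _ hNpos]
    congr 1
    push_cast [Nat.cast_sub (le_of_lt hlt)]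
    ring
  · rw [if_neg hcond, if_neg hcond, ENNReal.ofReal_zero]


lemma tsum_fin_cast {a b : ℕ} (h : a = b) (f : (Fin a → ℕ) → ℝ≥0∞) :
    (∑' n : Fin a → ℕ, f n) = ∑' n : Fin b → ℕ, f (n ∘ Fin.cast h) := by
  subst h
  exact tsum_congr fun n => rfl

lemma dec_cast_iff {a b : ℕ} (h : a = b) (n : Fin b → ℕ) :
    (∀ i j : Fin a, i < j → n (Fin.cast h j) < n (Fin.cast h i))
      ↔ (∀ i j : Fin b, i < j → n j < n i) := by
  subst h
  exact Iff.rfl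

lemma get_append_snoc (t : List ℕ) (m : ℕ) (hL : (t ++ [m + 1]).length = t.length + 1)
    (i : Fin (t ++ [m + 1]).length) :
    (t ++ [m + 1]).get i = (Fin.snoc t.get (m + 1) : Fin (t.length + 1) → ℕ) (Fin.cast hL i) := by
  rw [List.get_eq_getElem]
  by_cases hi : (i : ℕ) < t.length
  · rw [List.getElem_append_left hi]
    have hcast : Fin.cast hL i = Fin.castSucc ⟨(i : ℕ), hi⟩ := Fin.ext rfl
    rw [hcast, Fin.snoc_castSucc]
    simp [List.get_eq_getElem]
  · have hival : (i : ℕ) = t.length := by have h1 := i.isLt; omega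
    rw [List.getElem_append_right (by omega)]
    have hcast : Fin.cast hL i = Fin.last t.length := Fin.ext (by simp [hival])
    rw [hcast, Fin.snoc_last]
    simp [hival]

theorem S_one_eq_T (t : List ℕ) (hpos : ∀ b ∈ t, 1 ≤ b) (m : ℕ)
    (h : 1 ≤ m ∨ ∃ b ∈ t, 2 ≤ b) :
    Sval (1 :: t) m = Tval (t ++ [m + 1]) := by
  rw [Sval_eq t m, Tval_eq (t ++ [m + 1]) (by simp)]
  have hL : (t ++ [m + 1]).length = t.length + 1 := by simp
  have h2 : (t ++ [m + 1]).length + 1 = t.length + 2 := by omega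
  congr 1
  rw [main_ennreal t.length m t.get, tsum_fin_cast h2]
  apply tsum_congr
  intro n
  simp only [Function.comp_apply]
  have hcond : (∀ i j : Fin ((t ++ [m + 1]).length + 1), i < j →
        n (Fin.cast h2 j) < n (Fin.cast h2 i))
      ↔ (∀ i j : Fin (t.length + 2), i < j → n j < n i) := dec_cast_iff h2 n
  have h00 : n (Fin.cast h2 0) = n 0 := congrArg n (Fin.ext (by simp))
  have hll : n (Fin.cast h2 (Fin.last (t ++ [m + 1]).length)) = n (Fin.last (t.length + 1)) :=
    congrArg n (Fin.ext (by simp [hL]))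
  have hprod : (∏ i : Fin (t ++ [m + 1]).length,
        (n (Fin.cast h2 i.castSucc)) ^ (t ++ [m + 1]).get i)
      = ∏ i : Fin (t.length + 1),
        (n i.castSucc) ^ (Fin.snoc t.get (m + 1) : Fin (t.length + 1) → ℕ) i := by
    apply Fintype.prod_equiv (finCongr hL)
    intro i
    rw [get_append_snoc t m hL i]
    have hb : n (Fin.cast h2 i.castSucc) = n ((finCongr hL i).castSucc) :=
      congrArg n (Fin.ext (by simp))
    rw [hb, finCongr_apply]
  by_cases hd : ∀ i j : Fin (t.length + 2), i < j → n j < n i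
  · rw [if_pos hd, if_pos (hcond.2 hd), h00, hll, hprod]
  · rw [if_neg hd, if_neg (fun hh => hd (hcond.1 hh))]
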